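/- Let c₁,...,cₙ, t₁,...,tₙ, γ₁,...,γₙ, τ₁,...,τₙ be real numbers, and define the n×n matrices A with rows A_j = c₁e₁ - c_{j+1}e_{j+1} for j = 1,...,n-1 and last row (γ₁,...,γₙ), and B with rows B_j = t₁e₁ - t_{j+1}e_{j+1} for j = 1,...,n-1 and last row (τ₁,...,τₙ). Then AB* is self-adjoint if and only if c₁τ₁ - γ₁t₁ = cⱼτⱼ - γⱼtⱼ for all j = 2,...,n. -/
import Mathlib


open Matrix

/-- For the matrices A (rows c₁e₁ - c_{j+1}e_{j+1} and last row γ) and B (rows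
t₁e₁ - t_{j+1}e_{j+1} and last row τ), A Bᵀ is self-adjoint iff
c₁τ₁ - γ₁t₁ = cⱼτⱼ - γⱼtⱼ for all j. -/
theorem stmt_16 (n : ℕ) (hn : 1 ≤ n)
    (c t γ τ : Fin (n + 1) → ℝ)
    (A B : Matrix (Fin (n + 1)) (Fin (n + 1)) ℝ)
    (hA : ∀ (j : Fin n) (k : Fin (n + 1)),
      A j.castSucc k = (if k = 0 then c 0 else 0) - (if k = j.succ then c j.succ else 0))
    (hAlast : ∀ k, A (Fin.last n) k = γ k)
    (hB : ∀ (j : Fin n) (k : Fin (n + 1)),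
      B j.castSucc k = (if k = 0 then t 0 else 0) - (if k = j.succ then t j.succ else 0))
    (hBlast : ∀ k, B (Fin.last n) k = τ k) :
    (A * Bᵀ).IsSymm ↔ ∀ j : Fin (n + 1), c 0 * τ 0 - γ 0 * t 0 = c j * τ j - γ j * t j := by
  have key1 : ∀ i : Fin n,
      (A * Bᵀ) i.castSucc (Fin.last n) = c 0 * τ 0 - c i.succ * τ i.succ := by
    intro i
    simp [Matrix.mul_apply, hA, hBlast, sub_mul, ite_mul, Finset.sum_sub_distrib,
      Finset.sum_ite_eq']
  have key2 : ∀ i : Fin n,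
      (A * Bᵀ) (Fin.last n) i.castSucc = γ 0 * t 0 - γ i.succ * t i.succ := by
    intro i
    simp [Matrix.mul_apply, hAlast, hB, mul_sub, mul_ite, Finset.sum_sub_distrib,
      Finset.sum_ite_eq']
  have key0 : ∀ i j : Fin n,
      (A * Bᵀ) i.castSucc j.castSucc =
        c 0 * t 0 + (if i = j then c i.succ * t j.succ else 0) := by
    intro i j
    simp [Matrix.mul_apply, hA, hB, sub_mul, mul_sub, ite_mul, mul_ite,
      Finset.sum_sub_distrib, Finset.sum_ite_eq', Fin.succ_ne_zero, Fin.succ_inj,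
      eq_comm (a := (0 : Fin (n+1)))]
    simp [eq_comm]
  constructor
  · intro h j
    cases j using Fin.cases with
    | zero => rfl
    | succ i =>
      have := congrFun (congrFun h i.castSucc) (Fin.last n)
      rw [Matrix.transpose_apply, key1 i, key2 i] at this
      linarith
  · intro h
    ext j k
    rw [Matrix.transpose_apply]
    cases j using Fin.lastCases with
    | last =>
      cases k using Fin.lastCases with
      | last => rfl
      | cast i =>
        rw [key1 i, key2 i]
        have := h i.succ
        linarith
    | cast i =>
      cases k using Fin.lastCases with
      | last =>
        rw [key1 i, key2 i]
        have := h i.succ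
        linarith
      | cast j =>
        rw [key0, key0]
        rcases eq_or_ne i j with rfl | hij
        · simp
        · simp [hij, Ne.symm hij]
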